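/- For all integers k ≥ 2, the path graphs satisfy: mdi_k(P_{k+2}) = k + 1, mdi_k(P_{k+3}) = k + 2, mdi_k(P_{k+4}) = k + 4, and mdi_k(P_{k+5}) ≥ k + 6. -/

import Mathlib

/-- `J` is a distance-`k` independent set in `G`: any two distinct vertices of `J`
are at graph distance at least `k + 1`. -/
def DkIndep {V : Type*} (G : SimpleGraph V) (k : ℕ) (J : Set V) : Prop :=
  ∀ ⦃u⦄, u ∈ J → ∀ ⦃v⦄, v ∈ J → u ≠ v → k + 1 ≤ G.dist u v

/-- `J` is a maximal distance-`k` independent set (`k`-MDIS) of `G`. -/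
def MaxDkIndep {V : Type*} (G : SimpleGraph V) (k : ℕ) (J : Set V) : Prop :=
  DkIndep G k J ∧ ∀ J', DkIndep G k J' → J ⊆ J' → J' = J

/-- `mdi G k` is the number of maximal distance-`k` independent sets of `G`. -/
noncomputable def mdi {V : Type*} (G : SimpleGraph V) (k : ℕ) : ℕ :=
  {J : Set V | MaxDkIndep G k J}.ncard

/-- `f_k(n)` from the paper. -/
def fk (k n : ℕ) : ℕ :=
  if n ≤ k + 1 then n else n - (n - k % 2) / (k / 2 + 1) + 1

/-- closed ball `N_k[x]`. -/
def ball {V : Type*} (G : SimpleGraph V) (k : ℕ) (x : V) : Set V :=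
  {v | G.dist x v ≤ k}

/-- a leaf is a vertex of degree 1. -/
def IsLeaf {V : Type*} (G : SimpleGraph V) (v : V) : Prop :=
  (G.neighborSet v).ncard = 1

/-- eccentricity of a vertex. -/
noncomputable def ecc {V : Type*} [Fintype V] (G : SimpleGraph V) (v : V) : ℕ :=
  Finset.univ.sup (G.dist v)

/-- diameter of a finite graph. -/
noncomputable def gdiam {V : Type*} [Fintype V] (G : SimpleGraph V) : ℕ :=
  Finset.univ.sup (ecc G)

/-- a central vertex is one of minimum eccentricity. -/
def IsCentral {V : Type*} [Fintype V] (G : SimpleGraph V) (v : V) : Prop :=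
  ∀ u, ecc G v ≤ ecc G u

/-- a `k`-twin: some other vertex has the same closed `k`-ball. -/
def KTwin {V : Type*} (G : SimpleGraph V) (k : ℕ) (u : V) : Prop :=
  ∃ v, v ≠ u ∧ ball G k u = ball G k v

/-- a diametral leaf: a leaf whose eccentricity equals the diameter. -/
def IsDiametralLeaf {V : Type*} [Fintype V] (G : SimpleGraph V) (u : V) : Prop :=
  IsLeaf G u ∧ ecc G u = gdiam G

/-- a `k`-special pair. -/
def KSpecial {V : Type*} [Fintype V] (G : SimpleGraph V) (k : ℕ) (x y : V) : Prop :=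
  IsDiametralLeaf G x ∧ IsDiametralLeaf G y ∧ KTwin G k x ∧ KTwin G k y ∧
    ball G k x ≠ ball G k y

/-- `mdi*_k(G, ℓ)`. -/
noncomputable def mdiStar {V : Type*} (G : SimpleGraph V) (k : ℕ) (ℓ : V) : ℕ :=
  {J : Set V | MaxDkIndep G k J ∧ ℓ ∈ J ∧ ∃ w ∉ J, ball G k w ∩ J = {ℓ}}.ncard

/-- The spider tree `S_{p,m}`: a center (`none`) together with `p` legs of `m` vertices. -/
def spider (p m : ℕ) : SimpleGraph (Option (Fin p × Fin m)) :=
  SimpleGraph.fromRel fun a b =>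
    match a, b with
    | none, some (_, j) => (j : ℕ) = 0
    | some (i, j), some (i', j') => i = i' ∧ (j : ℕ) + 1 = (j' : ℕ)
    | _, _ => False

/-- `S'_{p,m}`: the spider `S_{p,m}` with one leaf at distance `m` from the center removed. -/
def spider' (p m : ℕ) (hp : 0 < p) (hm : 0 < m) :=
  (spider p m).induce
    {v | v ≠ some (⟨0, hp⟩, ⟨m - 1, Nat.sub_lt hm Nat.one_pos⟩)}

/-- The double spider `B_{p₁,p₂,s}`: two adjacent centers (`Sum.inl false`, `Sum.inl true`),
with `p₁` legs of `s` vertices on the first and `p₂` legs of `s` vertices on the second. -/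
def btree (p₁ p₂ s : ℕ) : SimpleGraph (Bool ⊕ ((Fin p₁ ⊕ Fin p₂) × Fin s)) :=
  SimpleGraph.fromRel fun a b =>
    match a, b with
    | Sum.inl x, Sum.inl y => x ≠ y
    | Sum.inl false, Sum.inr (Sum.inl _, j) => (j : ℕ) = 0
    | Sum.inl true, Sum.inr (Sum.inr _, j) => (j : ℕ) = 0
    | Sum.inr (c, j), Sum.inr (c', j') => c = c' ∧ (j : ℕ) + 1 = (j' : ℕ)
    | _, _ => False

/-- `G` contains a subgraph isomorphic to `H`. -/
def ContainsSub {V W : Type*} (G : SimpleGraph V) (H : SimpleGraph W) : Prop :=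
  ∃ f : W → V, Function.Injective f ∧ ∀ a b, H.Adj a b → G.Adj (f a) (f b)

/-- A pendant path on `s` vertices `P 0, …, P (s-1)` attached to `w`:
`P 0` is a leaf, consecutive vertices are adjacent, interior vertices have degree 2,
and `P (s-1)` is adjacent to `w`. -/
def IsPendantPath {V : Type*} (T : SimpleGraph V) (s : ℕ) (P : ℕ → V) (w : V) : Prop :=
  Set.InjOn P (Set.Iio s) ∧ (∀ i < s, P i ≠ w) ∧ IsLeaf T (P 0) ∧
    (∀ i, i + 1 < s → T.Adj (P i) (P (i + 1))) ∧
    (∀ i, 0 < i → i < s → (T.neighborSet (P i)).ncard = 2) ∧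
    T.Adj (P (s - 1)) w

/-- Isomorphism of simple graphs on `Fin n` as a setoid. -/
def graphSetoid (n : ℕ) : Setoid (SimpleGraph (Fin n)) where
  r G H := Nonempty (G ≃g H)
  iseqv := ⟨fun _ => ⟨SimpleGraph.Iso.refl⟩, fun ⟨e⟩ => ⟨e.symm⟩, fun ⟨e⟩ ⟨f⟩ => ⟨e.trans f⟩⟩

/-- The number of isomorphism classes of graphs in a set of graphs on `Fin n`. -/
noncomputable def numIsoClasses {n : ℕ} (S : Set (SimpleGraph (Fin n))) : ℕ :=
  ((fun G => Quotient.mk (graphSetoid n) G) '' S).ncard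

open Fin.NatCast

section Aux

open SimpleGraph

/-- Any walk in a path graph has length at least the value gap. -/
lemma pathWalk_le {n : ℕ} {u v : Fin n} (p : (pathGraph n).Walk u v) :
    (u.val - v.val) + (v.val - u.val) ≤ p.length := by
  induction p with
  | nil => omega
  | @cons a b c h p ih =>
    rw [pathGraph_adj] at h
    simp only [Walk.length_cons]
    omega

lemma pathDist_le (n : ℕ) : ∀ d (u v : Fin n), u.val ≤ v.val → v.val - u.val = d →
    (pathGraph n).dist u v ≤ d := by
  intro d
  induction d with
  | zero =>
    intro u v h1 h2
    have : u = v := Fin.ext (by omega)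
    simp [this]
  | succ d ih =>
    intro u v h1 h2
    have hlt : u.val + 1 < n := by have := v.isLt; omega
    set u' : Fin n := ⟨u.val + 1, hlt⟩ with hu'
    have hadj : (pathGraph n).Adj u u' := by
      rw [pathGraph_adj]; left; rfl
    have hconn : (pathGraph n).Connected := by
      cases n with
      | zero => exact absurd u.isLt (by omega)
      | succ m => exact pathGraph_connected m
    calc (pathGraph n).dist u v
        ≤ (pathGraph n).dist u u' + (pathGraph n).dist u' v := hconn.dist_triangle
      _ ≤ 1 + d := by
          have h3 : (pathGraph n).dist u u' ≤ 1 := by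
            simpa using SimpleGraph.dist_le hadj.toWalk
          have h4 : (pathGraph n).dist u' v ≤ d := ih u' v (by simp [hu']; omega) (by simp [hu']; omega)
          omega
      _ = d + 1 := by omega

/-- Distance in the path graph. -/
lemma pathDist {n : ℕ} (u v : Fin n) :
    (pathGraph n).dist u v = (u.val - v.val) + (v.val - u.val) := by
  have hconn : (pathGraph n).Connected := by
    cases n with
    | zero => exact absurd u.isLt (by omega)
    | succ m => exact pathGraph_connected m
  refine le_antisymm ?_ ?_
  · rcases le_total u.val v.val with h | h
    · have := pathDist_le n (v.val - u.val) u v h rfl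
      omega
    · have := pathDist_le n (u.val - v.val) v u h rfl
      rw [SimpleGraph.dist_comm] at this
      omega
  · obtain ⟨p, hp⟩ := hconn.exists_walk_length_eq_dist u v
    have := pathWalk_le p
    omega

/-- Characterization of maximal distance-k independent sets. -/
lemma maxDkIndep_iff {V : Type*} (G : SimpleGraph V) (k : ℕ) (J : Set V) :
    MaxDkIndep G k J ↔ DkIndep G k J ∧ ∀ v, v ∉ J → ∃ u ∈ J, G.dist u v ≤ k := by
  constructor
  · rintro ⟨hind, hmax⟩
    refine ⟨hind, fun v hv => ?_⟩
    by_contra h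
    push_neg at h
    have hind' : DkIndep G k (insert v J) := by
      intro a ha b hb hab
      have haJ : a = v ∨ a ∈ J := Set.mem_insert_iff.1 ha
      have hbJ : b = v ∨ b ∈ J := Set.mem_insert_iff.1 hb
      rcases haJ with rfl | haJ
      · rcases hbJ with rfl | hbJ
        · exact absurd rfl hab
        · rw [SimpleGraph.dist_comm]
          have := h b hbJ
          omega
      · rcases hbJ with rfl | hbJ
        · have := h a haJ
          omega
        · exact hind haJ hbJ hab
    have := hmax _ hind' (Set.subset_insert v J)
    exact hv (this ▸ Set.mem_insert v J)
  · rintro ⟨hind, hdom⟩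
    refine ⟨hind, fun J' hJ' hsub => ?_⟩
    ext w
    refine ⟨fun hw => ?_, fun hw => hsub hw⟩
    by_contra hwJ
    obtain ⟨u, hu, hud⟩ := hdom w hwJ
    have hne : u ≠ w := fun h => hwJ (h ▸ hu)
    have := hJ' (hsub hu) hw hne
    omega

lemma path_max_iff {n k : ℕ} (J : Set (Fin n)) :
    MaxDkIndep (pathGraph n) k J ↔
      (∀ u ∈ J, ∀ v ∈ J, u ≠ v → k + 1 ≤ (u.val - v.val) + (v.val - u.val)) ∧
      (∀ v, v ∉ J → ∃ u ∈ J, (u.val - v.val) + (v.val - u.val) ≤ k) := by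
  rw [maxDkIndep_iff]
  constructor
  · rintro ⟨h1, h2⟩
    refine ⟨fun u hu v hv huv => ?_, fun v hv => ?_⟩
    · have := h1 hu hv huv
      rw [pathDist] at this
      omega
    · obtain ⟨u, hu, hud⟩ := h2 v hv
      rw [pathDist] at hud
      exact ⟨u, hu, hud⟩
  · rintro ⟨h1, h2⟩
    refine ⟨fun u hu v hv huv => ?_, fun v hv => ?_⟩
    · rw [pathDist]
      exact h1 u hu v hv huv
    · obtain ⟨u, hu, hud⟩ := h2 v hv
      exact ⟨u, hu, by rw [pathDist]; exact hud⟩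

lemma sing_mdis {n k : ℕ} (i : Fin n) (h1 : i.val ≤ k) (h2 : n ≤ i.val + k + 1) :
    MaxDkIndep (pathGraph n) k {i} := by
  rw [path_max_iff]
  constructor
  · intro u hu v hv huv
    simp only [Set.mem_singleton_iff] at hu hv
    subst hu; subst hv
    exact absurd rfl huv
  · intro v hv
    exact ⟨i, rfl, by have := v.isLt; omega⟩

lemma pair_mdis {n k : ℕ} (u v : Fin n) (h1 : u.val ≤ k) (h2 : u.val + k + 1 ≤ v.val)
    (h3 : v.val ≤ u.val + 2 * k + 1) (h4 : n ≤ v.val + k + 1) :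
    MaxDkIndep (pathGraph n) k {u, v} := by
  rw [path_max_iff]
  constructor
  · intro a ha b hb hab
    have hab' : a.val ≠ b.val := fun h => hab (Fin.ext h)
    simp only [Set.mem_insert_iff, Set.mem_singleton_iff] at ha hb
    rcases ha with rfl | rfl <;> rcases hb with rfl | rfl <;> omega
  · intro w hw
    by_cases hcase : w.val ≤ u.val + k
    · exact ⟨u, by simp, by omega⟩
    · exact ⟨v, by simp, by have := w.isLt; omega⟩

lemma path_classify {n k : ℕ} (hn : 0 < n) (hn2 : n ≤ 2 * k + 2) (J : Set (Fin n))
    (hJ : MaxDkIndep (pathGraph n) k J) :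
    (∃ i : Fin n, J = {i} ∧ i.val ≤ k ∧ n ≤ i.val + k + 1) ∨
    (∃ u v : Fin n, J = {u, v} ∧ u.val + k + 1 ≤ v.val) := by
  rw [path_max_iff] at hJ
  obtain ⟨hind, hdom⟩ := hJ
  by_cases htwo : ∃ u ∈ J, ∃ v ∈ J, u.val < v.val
  · obtain ⟨u, hu, v, hv, huv⟩ := htwo
    right
    have hne : u ≠ v := fun h => by rw [h] at huv; omega
    refine ⟨u, v, ?_, ?_⟩
    · ext w
      simp only [Set.mem_insert_iff, Set.mem_singleton_iff]
      constructor
      · intro hw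
        by_contra hcon
        push_neg at hcon
        obtain ⟨hw1, hw2⟩ := hcon
        have d1 := hind u hu w hw (Ne.symm hw1)
        have d2 := hind v hv w hw (Ne.symm hw2)
        have d3 := hind u hu v hv hne
        have := u.isLt; have := v.isLt; have := w.isLt
        omega
      · rintro (rfl | rfl) <;> assumption
    · have := hind u hu v hv hne
      omega
  · push_neg at htwo
    left
    rcases Set.eq_empty_or_nonempty J with rfl | ⟨i, hi⟩
    · obtain ⟨u, hu, -⟩ := hdom ⟨0, hn⟩ (Set.notMem_empty _)
      exact (Set.notMem_empty u hu).elim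
    · have hJi : J = {i} := by
        ext w
        simp only [Set.mem_singleton_iff]
        refine ⟨fun hw => ?_, fun h => h ▸ hi⟩
        have h1 := htwo w hw i hi
        have h2 := htwo i hi w hw
        exact Fin.ext (by omega)
      have hall : ∀ v : Fin n, (i.val - v.val) + (v.val - i.val) ≤ k := by
        intro v
        by_cases hv : v ∈ J
        · rw [hJi, Set.mem_singleton_iff] at hv
          subst hv
          omega
        · obtain ⟨u, hu, hud⟩ := hdom v hv
          rw [hJi, Set.mem_singleton_iff] at hu
          subst hu
          exact hud
      have e1 := hall ⟨0, hn⟩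
      have e2 := hall ⟨n - 1, by omega⟩
      exact ⟨i, hJi, by simpa using e1, by have := i.isLt; simp at e2; omega⟩

lemma pair_inj_aux {n : ℕ} {w x y z : Fin n} (h1 : w.val < x.val) (h2 : y.val < z.val)
    (h : ({w, x} : Set (Fin n)) = {y, z}) : w = y ∧ x = z := by
  rw [Set.ext_iff] at h
  have hw := (h w).1 (by simp)
  have hx := (h x).1 (by simp)
  have hy := (h y).2 (by simp)
  have hz := (h z).2 (by simp)
  simp only [Set.mem_insert_iff, Set.mem_singleton_iff] at hw hx hy hz
  have Hw : w.val = y.val ∨ w.val = z.val := hw.imp (congrArg _) (congrArg _)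
  have Hx : x.val = y.val ∨ x.val = z.val := hx.imp (congrArg _) (congrArg _)
  have Hy : y.val = w.val ∨ y.val = x.val := hy.imp (congrArg _) (congrArg _)
  have Hz : z.val = w.val ∨ z.val = x.val := hz.imp (congrArg _) (congrArg _)
  exact ⟨Fin.ext (by omega), Fin.ext (by omega)⟩

/-- The singleton-image family. -/
def SingF (n k : ℕ) [NeZero n] (A : Set ℕ) : Set (Set (Fin n)) :=
  (fun m : ℕ => ({(m : Fin n)} : Set (Fin n))) '' A

/-- The pair-image family. -/
def PairF (n k : ℕ) [NeZero n] (B : Set (ℕ × ℕ)) : Set (Set (Fin n)) :=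
  (fun p : ℕ × ℕ => ({(p.1 : Fin n), ((p.1 + k + 1 + p.2 : ℕ) : Fin n)} : Set (Fin n))) '' B

lemma count_union {n k : ℕ} [NeZero n] (A : Set ℕ) (B : Set (ℕ × ℕ))
    (hA : A.Finite) (hB : B.Finite)
    (hAn : ∀ m ∈ A, m < n) (hBn : ∀ p ∈ B, p.1 + k + 1 + p.2 < n) :
    (SingF n k A ∪ PairF n k B).ncard = A.ncard + B.ncard := by
  have hinjA : Set.InjOn (fun m : ℕ => ({(m : Fin n)} : Set (Fin n))) A := by
    intro a ha b hb hab
    simp only [Set.singleton_eq_singleton_iff] at hab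
    have := congrArg Fin.val hab
    rwa [Fin.val_cast_of_lt (hAn a ha), Fin.val_cast_of_lt (hAn b hb)] at this
  have hinjB : Set.InjOn
      (fun p : ℕ × ℕ => ({(p.1 : Fin n), ((p.1 + k + 1 + p.2 : ℕ) : Fin n)} : Set (Fin n))) B := by
    intro p hp q hq hpq
    have hp1 : ((p.1 : Fin n)).val = p.1 := Fin.val_cast_of_lt (by have := hBn p hp; omega)
    have hp2 : (((p.1 + k + 1 + p.2 : ℕ) : Fin n)).val = p.1 + k + 1 + p.2 :=
      Fin.val_cast_of_lt (hBn p hp)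
    have hq1 : ((q.1 : Fin n)).val = q.1 := Fin.val_cast_of_lt (by have := hBn q hq; omega)
    have hq2 : (((q.1 + k + 1 + q.2 : ℕ) : Fin n)).val = q.1 + k + 1 + q.2 :=
      Fin.val_cast_of_lt (hBn q hq)
    have := pair_inj_aux (by omega) (by omega) hpq
    obtain ⟨e1, e2⟩ := this
    have v1 := congrArg Fin.val e1
    have v2 := congrArg Fin.val e2
    rw [hp1, hq1] at v1
    rw [hp2, hq2] at v2
    exact Prod.ext v1 (by omega)
  have hdisj : Disjoint (SingF n k A) (PairF n k B) := by
    rw [Set.disjoint_left]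
    rintro S ⟨m, hm, rfl⟩ ⟨p, hp, hSp⟩
    have hp1 : ((p.1 : Fin n)).val = p.1 := Fin.val_cast_of_lt (by have := hBn p hp; omega)
    have hp2 : (((p.1 + k + 1 + p.2 : ℕ) : Fin n)).val = p.1 + k + 1 + p.2 :=
      Fin.val_cast_of_lt (hBn p hp)
    have hSp' : ({(p.1 : Fin n), ((p.1 + k + 1 + p.2 : ℕ) : Fin n)} : Set (Fin n)) =
        {(m : Fin n)} := hSp
    have h1 := (Set.ext_iff.1 hSp' ((p.1 : Fin n))).1 (by simp)
    have h2 := (Set.ext_iff.1 hSp' (((p.1 + k + 1 + p.2 : ℕ) : Fin n))).1 (by simp)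
    simp only [Set.mem_singleton_iff] at h1 h2
    have := congrArg Fin.val (h1.trans h2.symm)
    rw [hp1, hp2] at this
    omega
  rw [Set.ncard_union_eq hdisj (hA.image _) (hB.image _)]
  unfold SingF PairF
  rw [Set.ncard_image_of_injOn hinjA, Set.ncard_image_of_injOn hinjB]

lemma path_family {n : ℕ} (k r : ℕ) [NeZero n] (hn : n = k + 1 + r)
    (hr1 : 1 ≤ r) (hr : r ≤ k + 1) :
    {J : Set (Fin n) | MaxDkIndep (pathGraph n) k J} =
      SingF n k (Set.Icc r k) ∪ PairF n k {p : ℕ × ℕ | p.1 + p.2 + 1 ≤ r} := by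
  ext J
  simp only [Set.mem_setOf_eq, Set.mem_union, SingF, PairF, Set.mem_image, Set.mem_Icc]
  constructor
  · intro hJ
    rcases path_classify (by omega) (by omega) J hJ with ⟨i, hJi, hi1, hi2⟩ | ⟨u, v, hJuv, huv⟩
    · left
      refine ⟨i.val, ⟨by omega, hi1⟩, ?_⟩
      rw [Fin.cast_val_eq_self]
      exact hJi.symm
    · right
      refine ⟨(u.val, v.val - u.val - (k + 1)), ?_, ?_⟩
      · have := v.isLt
        show u.val + (v.val - u.val - (k + 1)) + 1 ≤ r
        omega
      · have hv : u.val + k + 1 + (v.val - u.val - (k + 1)) = v.val := by omega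
        simp only [hv, Fin.cast_val_eq_self]
        exact hJuv.symm
  · rintro (⟨m, ⟨hm1, hm2⟩, rfl⟩ | ⟨p, hp, rfl⟩)
    · have hmval : ((m : Fin n)).val = m := Fin.val_cast_of_lt (by omega)
      exact sing_mdis _ (by omega) (by omega)
    · have hp' : p.1 + p.2 + 1 ≤ r := hp
      have h1 : ((p.1 : Fin n)).val = p.1 := Fin.val_cast_of_lt (by omega)
      have h2 : (((p.1 + k + 1 + p.2 : ℕ) : Fin n)).val = p.1 + k + 1 + p.2 :=
        Fin.val_cast_of_lt (by omega)
      exact pair_mdis _ _ (by omega) (by omega) (by omega) (by omega)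

lemma triple_mdis {n k : ℕ} (u v w : Fin n) (h1 : u.val ≤ k) (h2 : u.val + k + 1 ≤ v.val)
    (h3 : v.val ≤ u.val + 2 * k + 1) (h4 : v.val + k + 1 ≤ w.val)
    (h5 : w.val ≤ v.val + 2 * k + 1) (h6 : n ≤ w.val + k + 1) :
    MaxDkIndep (pathGraph n) k {u, v, w} := by
  rw [path_max_iff]
  constructor
  · intro a ha b hb hab
    have hab' : a.val ≠ b.val := fun h => hab (Fin.ext h)
    simp only [Set.mem_insert_iff, Set.mem_singleton_iff] at ha hb
    rcases ha with rfl | rfl | rfl <;> rcases hb with rfl | rfl | rfl <;> omega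
  · intro x hx
    by_cases c1 : x.val ≤ u.val + k
    · exact ⟨u, by simp, by omega⟩
    · by_cases c2 : x.val ≤ v.val + k
      · exact ⟨v, by simp, by omega⟩
      · exact ⟨w, by simp, by have := x.isLt; omega⟩

lemma count_pair {n k : ℕ} [NeZero n] (B : Set (ℕ × ℕ)) (hB : B.Finite)
    (hBn : ∀ p ∈ B, p.1 + k + 1 + p.2 < n) : (PairF n k B).ncard = B.ncard := by
  have h := count_union (n := n) (k := k) ∅ B Set.finite_empty hB (by simp) hBn
  simpa [SingF] using h

lemma ncard_Icc_nat (a b : ℕ) : (Set.Icc a b).ncard = b + 1 - a := by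
  rw [← Finset.coe_Icc, Set.ncard_coe_finset, Nat.card_Icc]

end Aux

/-- For `k ≥ 2`: `mdi_k(P_{k+2}) = k+1`, `mdi_k(P_{k+3}) = k+2`,
`mdi_k(P_{k+4}) = k+4`, and `mdi_k(P_{k+5}) ≥ k+6`. -/
theorem stmt_5 (k : ℕ) (hk : 2 ≤ k) :
    mdi (SimpleGraph.pathGraph (k + 2)) k = k + 1 ∧
    mdi (SimpleGraph.pathGraph (k + 3)) k = k + 2 ∧
    mdi (SimpleGraph.pathGraph (k + 4)) k = k + 4 ∧
    k + 6 ≤ mdi (SimpleGraph.pathGraph (k + 5)) k := by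
  have key : ∀ r : ℕ, 1 ≤ r → r ≤ k + 1 → ∀ F : Finset (ℕ × ℕ),
      {p : ℕ × ℕ | p.1 + p.2 + 1 ≤ r} = ↑F →
      mdi (SimpleGraph.pathGraph (k + 1 + r)) k = (k + 1 - r) + F.card := by
    intro r hr1 hr F hF
    haveI : NeZero (k + 1 + r) := ⟨by omega⟩
    unfold mdi
    rw [path_family k r rfl hr1 hr]
    rw [count_union _ _ (Set.finite_Icc _ _) (hF ▸ F.finite_toSet)
      (fun m hm => by simp only [Set.mem_Icc] at hm; omega)
      (fun p hp => by have h : p.1 + p.2 + 1 ≤ r := hp; omega)]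
    rw [ncard_Icc_nat, hF, Set.ncard_coe_finset]
  refine ⟨?_, ?_, ?_, ?_⟩
  · show mdi (SimpleGraph.pathGraph (k + 1 + 1)) k = k + 1
    rw [key 1 (by omega) (by omega) {(0, 0)}
      (by ext ⟨a, b⟩; simp only [Set.mem_setOf_eq, Finset.coe_insert, Set.mem_insert_iff, Finset.coe_singleton, Set.mem_singleton_iff, Prod.mk.injEq]; omega)]
    rw [show ({(0, 0)} : Finset (ℕ × ℕ)).card = 1 by decide]
    omega
  · show mdi (SimpleGraph.pathGraph (k + 1 + 2)) k = k + 2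
    rw [key 2 (by omega) (by omega) {(0, 0), (0, 1), (1, 0)}
      (by ext ⟨a, b⟩; simp only [Set.mem_setOf_eq, Finset.coe_insert, Set.mem_insert_iff, Finset.coe_singleton, Set.mem_singleton_iff, Prod.mk.injEq]; omega)]
    rw [show ({(0, 0), (0, 1), (1, 0)} : Finset (ℕ × ℕ)).card = 3 by decide]
    omega
  · show mdi (SimpleGraph.pathGraph (k + 1 + 3)) k = k + 4
    rw [key 3 (by omega) (by omega) {(0, 0), (0, 1), (0, 2), (1, 0), (1, 1), (2, 0)}
      (by ext ⟨a, b⟩; simp only [Set.mem_setOf_eq, Finset.coe_insert, Set.mem_insert_iff, Finset.coe_singleton, Set.mem_singleton_iff, Prod.mk.injEq]; omega)]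
    rw [show ({(0, 0), (0, 1), (0, 2), (1, 0), (1, 1), (2, 0)} : Finset (ℕ × ℕ)).card = 6
      by decide]
    omega
  · -- lower bound for P_{k+5}
    rcases Nat.lt_or_ge k 3 with hk3 | hk3
    · -- k = 2
      obtain rfl : k = 2 := by omega
      haveI : NeZero 7 := ⟨by omega⟩
      set B7 : Set (ℕ × ℕ) :=
        {p : ℕ × ℕ | p.1 + p.2 ≤ 3 ∧ p.1 ≤ 2 ∧ p.2 ≤ 2 ∧ 1 ≤ p.1 + p.2} with hB7
      have hB7eq : B7 = ↑({(0, 1), (0, 2), (1, 0), (1, 1), (1, 2), (2, 0), (2, 1)} :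
          Finset (ℕ × ℕ)) := by
        ext ⟨a, b⟩; rw [hB7]; simp only [Set.mem_setOf_eq, Finset.coe_insert, Set.mem_insert_iff, Finset.coe_singleton, Set.mem_singleton_iff, Prod.mk.injEq]; omega
      set T : Set (Fin 7) := {((0 : ℕ) : Fin 7), ((3 : ℕ) : Fin 7), ((6 : ℕ) : Fin 7)} with hT
      have hBn : ∀ p ∈ B7, p.1 + 2 + 1 + p.2 < 7 := by
        rintro p ⟨h1, -⟩; omega
      have hsub : insert T (PairF 7 2 B7) ⊆
          {J : Set (Fin 7) | MaxDkIndep (SimpleGraph.pathGraph 7) 2 J} := by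
        rintro J hJ
        rcases Set.mem_insert_iff.1 hJ with rfl | ⟨p, hp, rfl⟩
        · have v0 : ((0 : ℕ) : Fin 7).val = 0 := Fin.val_cast_of_lt (by omega)
          have v3 : ((3 : ℕ) : Fin 7).val = 3 := Fin.val_cast_of_lt (by omega)
          have v6 : ((6 : ℕ) : Fin 7).val = 6 := Fin.val_cast_of_lt (by omega)
          exact triple_mdis _ _ _ (by omega) (by omega) (by omega) (by omega) (by omega)
            (by omega)
        · obtain ⟨hp1, hp2, hp3, hp4⟩ := hp
          have e1 : ((p.1 : Fin 7)).val = p.1 := Fin.val_cast_of_lt (by omega)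
          have e2 : (((p.1 + 2 + 1 + p.2 : ℕ) : Fin 7)).val = p.1 + 2 + 1 + p.2 :=
            Fin.val_cast_of_lt (by omega)
          exact pair_mdis _ _ (by omega) (by omega) (by omega) (by omega)
      have hTnot : T ∉ PairF 7 2 B7 := by
        rintro ⟨p, hp, hTp⟩
        obtain ⟨hp1, hp2, hp3, hp4⟩ := hp
        have hTp' : ({(p.1 : Fin 7), ((p.1 + 2 + 1 + p.2 : ℕ) : Fin 7)} : Set (Fin 7)) = T :=
          hTp
        have h3 : ((3 : ℕ) : Fin 7) ∈
            ({(p.1 : Fin 7), ((p.1 + 2 + 1 + p.2 : ℕ) : Fin 7)} : Set (Fin 7)) := by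
          rw [hTp']; simp [hT]
        simp only [Set.mem_insert_iff, Set.mem_singleton_iff] at h3
        have e1 : ((p.1 : Fin 7)).val = p.1 := Fin.val_cast_of_lt (by omega)
        have e2 : (((p.1 + 2 + 1 + p.2 : ℕ) : Fin 7)).val = p.1 + 2 + 1 + p.2 :=
          Fin.val_cast_of_lt (by omega)
        have e3 : ((3 : ℕ) : Fin 7).val = 3 := Fin.val_cast_of_lt (by omega)
        rcases h3 with h | h
        · have := congrArg Fin.val h; rw [e1, e3] at this; omega
        · have := congrArg Fin.val h; rw [e2, e3] at this; omega
      have hcard : (insert T (PairF 7 2 B7)).ncard = 8 := by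
        rw [Set.ncard_insert_of_notMem hTnot (Set.toFinite _),
          count_pair B7 (hB7eq ▸ Finset.finite_toSet _) hBn, hB7eq, Set.ncard_coe_finset]
        decide
      have hle := Set.ncard_le_ncard hsub (Set.toFinite _)
      show 2 + 6 ≤ mdi (SimpleGraph.pathGraph 7) 2
      unfold mdi
      omega
    · -- k ≥ 3
      haveI : NeZero (k + 5) := ⟨by omega⟩
      set B10 : Set (ℕ × ℕ) := {p : ℕ × ℕ | p.1 + p.2 ≤ 3} with hB10
      have hB10eq : B10 = ↑({(0, 0), (0, 1), (0, 2), (0, 3), (1, 0), (1, 1), (1, 2),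
          (2, 0), (2, 1), (3, 0)} : Finset (ℕ × ℕ)) := by
        ext ⟨a, b⟩; rw [hB10]; simp only [Set.mem_setOf_eq, Finset.coe_insert, Set.mem_insert_iff, Finset.coe_singleton, Set.mem_singleton_iff, Prod.mk.injEq]; omega
      have hBn : ∀ p ∈ B10, p.1 + k + 1 + p.2 < k + 5 := by
        rintro p hp
        have h : p.1 + p.2 ≤ 3 := hp
        omega
      have hsub : SingF (k + 5) k (Set.Icc 4 k) ∪ PairF (k + 5) k B10 ⊆
          {J : Set (Fin (k + 5)) | MaxDkIndep (SimpleGraph.pathGraph (k + 5)) k J} := by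
        rintro J (⟨m, hm, rfl⟩ | ⟨p, hp, rfl⟩)
        · simp only [Set.mem_Icc] at hm
          have e1 : ((m : Fin (k + 5))).val = m := Fin.val_cast_of_lt (by omega)
          exact sing_mdis _ (by omega) (by omega)
        · have h : p.1 + p.2 ≤ 3 := hp
          have e1 : ((p.1 : Fin (k + 5))).val = p.1 := Fin.val_cast_of_lt (by omega)
          have e2 : (((p.1 + k + 1 + p.2 : ℕ) : Fin (k + 5))).val = p.1 + k + 1 + p.2 :=
            Fin.val_cast_of_lt (by omega)
          exact pair_mdis _ _ (by omega) (by omega) (by omega) (by omega)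
      have hcard : (SingF (k + 5) k (Set.Icc 4 k) ∪ PairF (k + 5) k B10).ncard = k + 7 := by
        rw [count_union _ _ (Set.finite_Icc _ _) (hB10eq ▸ Finset.finite_toSet _)
          (fun m hm => by simp only [Set.mem_Icc] at hm; omega) hBn]
        rw [ncard_Icc_nat, hB10eq, Set.ncard_coe_finset]
        rw [show ({(0, 0), (0, 1), (0, 2), (0, 3), (1, 0), (1, 1), (1, 2),
          (2, 0), (2, 1), (3, 0)} : Finset (ℕ × ℕ)).card = 10 by decide]
        omega
      have hle := Set.ncard_le_ncard hsub (Set.toFinite _)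
      unfold mdi
      omega
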